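/- arXiv:1502.02209 — 9 statements merged into one kernel-verified Lean document; each statement's English description precedes it below -/
import Mathlib

section
/- Every principal sub-tensor of a semi-positive tensor is semi-positive. -/
open Finset

/-- `(A x^{m-1})_i`: contraction of an order-`(m+1)` tensor with `m` copies of `x`. -/
def tcontr {m : ℕ} {ι : Type*} [Fintype ι] [DecidableEq ι]
    (A : (Fin (m + 1) → ι) → ℝ) (x : ι → ℝ) (i : ι) : ℝ :=
  ∑ g : Fin m → ι, A (Fin.cons i g) * ∏ t, x (g t)

/-- `A x^{m}` : the homogeneous form of an order-`(m+1)` tensor. -/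
def tform {m : ℕ} {ι : Type*} [Fintype ι] [DecidableEq ι]
    (A : (Fin (m + 1) → ι) → ℝ) (x : ι → ℝ) : ℝ :=
  ∑ f : Fin (m + 1) → ι, A f * ∏ t, x (f t)

def SemiPos {m : ℕ} {ι : Type*} [Fintype ι] [DecidableEq ι]
    (A : (Fin (m + 1) → ι) → ℝ) : Prop :=
  ∀ x : ι → ℝ, 0 ≤ x → x ≠ 0 → ∃ k, 0 < x k ∧ 0 ≤ tcontr A x k

def StrictSemiPos {m : ℕ} {ι : Type*} [Fintype ι] [DecidableEq ι]
    (A : (Fin (m + 1) → ι) → ℝ) : Prop :=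
  ∀ x : ι → ℝ, 0 ≤ x → x ≠ 0 → ∃ k, 0 < x k ∧ 0 < tcontr A x k

def Copos {m : ℕ} {ι : Type*} [Fintype ι] [DecidableEq ι]
    (A : (Fin (m + 1) → ι) → ℝ) : Prop :=
  ∀ x : ι → ℝ, 0 ≤ x → 0 ≤ tform A x

def StrictCopos {m : ℕ} {ι : Type*} [Fintype ι] [DecidableEq ι]
    (A : (Fin (m + 1) → ι) → ℝ) : Prop :=
  ∀ x : ι → ℝ, 0 ≤ x → x ≠ 0 → 0 < tform A x

/-- Symmetric tensor: entries invariant under any permutation of indices. -/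
def SymT {m : ℕ} {ι : Type*} (A : (Fin (m + 1) → ι) → ℝ) : Prop :=
  ∀ (f : Fin (m + 1) → ι) (σ : Equiv.Perm (Fin (m + 1))), A (f ∘ σ) = A f

/-- `x` solves the tensor complementarity problem TCP(q, A). -/
def TCPsol {m n : ℕ} (A : (Fin (m + 1) → Fin n) → ℝ) (q x : Fin n → ℝ) : Prop :=
  0 ≤ x ∧ (∀ i, 0 ≤ q i + tcontr A x i) ∧ (∑ i, x i * (q i + tcontr A x i)) = 0

/-- The principal sub-tensor of `A` with all indices in `N`. -/
def subT {m n : ℕ} (A : (Fin (m + 1) → Fin n) → ℝ) (N : Finset (Fin n)) :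
    (Fin (m + 1) → {i // i ∈ N}) → ℝ :=
  fun f => A fun t => (f t : Fin n)

theorem stmt_4 {m n : ℕ} (A : (Fin (m + 1) → Fin n) → ℝ) (h : SemiPos A)
    (N : Finset (Fin n)) (hN : N.Nonempty) : SemiPos (subT A N) := by
  intro y hy hy0
  set x : Fin n → ℝ := fun i => if h : i ∈ N then y ⟨i, h⟩ else 0 with hxdef
  have hx0 : 0 ≤ x := by
    intro i
    simp only [hxdef]
    split
    · exact hy _
    · exact le_refl 0
  have hxne : x ≠ 0 := by
    intro hc
    apply hy0
    funext j
    have := congrFun hc j.1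
    simpa [hxdef, j.2] using this
  obtain ⟨k, hk, hkc⟩ := h x hx0 hxne
  have hkN : k ∈ N := by
    by_contra hn
    simp [hxdef, hn] at hk
  refine ⟨⟨k, hkN⟩, by simpa [hxdef, hkN] using hk, ?_⟩
  have h1 : tcontr A x k =
      ∑ g ∈ Finset.univ.filter (fun g : Fin m → Fin n => ∀ t, g t ∈ N),
        A (Fin.cons k g) * ∏ t, x (g t) := by
    rw [tcontr, ← Finset.sum_filter_add_sum_filter_not Finset.univ
      (fun g : Fin m → Fin n => ∀ t, g t ∈ N)]
    have hz : ∑ g ∈ Finset.univ.filter (fun g : Fin m → Fin n => ¬ ∀ t, g t ∈ N),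
        A (Fin.cons k g) * ∏ t, x (g t) = 0 := by
      apply Finset.sum_eq_zero
      intro g hg
      simp only [Finset.mem_filter] at hg
      push_neg at hg
      obtain ⟨t, ht⟩ := hg.2
      have hxz : x (g t) = 0 := by simp [hxdef, ht]
      rw [Finset.prod_eq_zero (Finset.mem_univ t) hxz, mul_zero]
    rw [hz, add_zero]
  have h2 : tcontr (subT A N) y ⟨k, hkN⟩ =
      ∑ g ∈ Finset.univ.filter (fun g : Fin m → Fin n => ∀ t, g t ∈ N),
        A (Fin.cons k g) * ∏ t, x (g t) := by
    rw [tcontr]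
    refine Finset.sum_nbij' (i := fun g => fun t => ((g t : Fin n)))
      (j := fun g => fun t => if h : g t ∈ N then ⟨g t, h⟩ else ⟨hN.choose, hN.choose_spec⟩)
      ?_ ?_ ?_ ?_ ?_
    · intro a _
      simp only [Finset.mem_filter, Finset.mem_univ, true_and]
      intro t
      exact (a t).2
    · intro a _
      exact Finset.mem_univ _
    · intro a _
      funext t
      simp [(a t).2]
    · intro a ha
      simp only [Finset.mem_filter, Finset.mem_univ, true_and] at ha
      funext t
      simp [ha t]
    · intro a _
      have h1 : subT A N (Fin.cons ⟨k, hkN⟩ a) = A (Fin.cons k fun t => ((a t : Fin n))) := by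
        unfold subT
        congr 1
        funext t
        refine Fin.cases ?_ ?_ t
        · simp
        · intro j
          simp
      rw [h1]
      congr 1
      apply Finset.prod_congr rfl
      intro t _
      simp [hxdef, (a t).2]
  rw [h2, ← h1]
  exact hkc
end

section
/- Every principal sub-tensor of a strictly semi-positive tensor is strictly semi-positive. -/
open Finset

lemma tcontr_subT {m n : ℕ} (A : (Fin (m + 1) → Fin n) → ℝ)
    (N : Finset (Fin n)) (x : {i // i ∈ N} → ℝ) (k : Fin n) (hk : k ∈ N) :
    tcontr (subT A N) x ⟨k, hk⟩
      = tcontr A (fun i => if h : i ∈ N then x ⟨i, h⟩ else 0) k := by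
  classical
  unfold tcontr subT
  set x' : Fin n → ℝ := fun i => if h : i ∈ N then x ⟨i, h⟩ else 0 with hx'
  set e : (Fin m → {i // i ∈ N}) → (Fin m → Fin n) := fun g t => (g t : Fin n) with he
  have hinj : Function.Injective e := by
    intro g g' hgg
    funext t
    exact Subtype.ext (congrFun hgg t)
  rw [show (∑ g : Fin m → Fin n, A (Fin.cons k g) * ∏ t, x' (g t))
      = ∑ g ∈ Finset.univ.image e, A (Fin.cons k g) * ∏ t, x' (g t) from ?_]
  · rw [Finset.sum_image (fun a _ b _ hab => hinj hab)]
    apply Finset.sum_congr rfl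
    intro g _
    congr 1
    · congr 1
      funext t
      refine Fin.cases ?_ ?_ t <;> simp [he]
    · apply Finset.prod_congr rfl
      intro t _
      simp [he, hx', (g t).2]
  · symm
    apply Finset.sum_subset (Finset.subset_univ _)
    intro g _ hg
    have : ∃ t, g t ∉ N := by
      by_contra hcon
      push_neg at hcon
      exact hg (Finset.mem_image.mpr ⟨fun t => ⟨g t, hcon t⟩, Finset.mem_univ _, rfl⟩)
    obtain ⟨t, ht⟩ := this
    have : x' (g t) = 0 := by simp [hx', ht]
    rw [Finset.prod_eq_zero (Finset.mem_univ t) this, mul_zero]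

theorem stmt_5 {m n : ℕ} (A : (Fin (m + 1) → Fin n) → ℝ) (h : StrictSemiPos A)
    (N : Finset (Fin n)) (hN : N.Nonempty) : StrictSemiPos (subT A N) := by
  classical
  intro x hx hx0
  set x' : Fin n → ℝ := fun i => if h : i ∈ N then x ⟨i, h⟩ else 0 with hx'
  have hx'0 : 0 ≤ x' := by
    intro i
    by_cases hi : i ∈ N <;> simp [hx', hi]
    exact hx _
  have hx'ne : x' ≠ 0 := by
    intro hcon
    apply hx0
    funext j
    have := congrFun hcon (j : Fin n)
    simpa [hx', j.2] using this
  obtain ⟨k, hk1, hk2⟩ := h x' hx'0 hx'ne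
  have hkN : k ∈ N := by
    by_contra hkn
    simp [hx', hkn] at hk1
  refine ⟨⟨k, hkN⟩, ?_, ?_⟩
  · simpa [hx', hkN] using hk1
  · rw [tcontr_subT A N x k hkN]
    exact hk2
end

section
/- A real tensor A of order m and dimension n is semi-positive if and only if for every q > 0 (componentwise), the tensor complementarity problem TCP(q, A) has the unique solution x = 0. -/
open Finset

theorem stmt_6 {m n : ℕ} (A : (Fin (m + 1) → Fin n) → ℝ) :
    SemiPos A ↔
      ∀ q : Fin n → ℝ, (∀ i, 0 < q i) → ∀ x : Fin n → ℝ, TCPsol A q x ↔ x = 0 := by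
  constructor
  · intro hA q hq x
    constructor
    · rintro ⟨hx0, hpos, hsum⟩
      by_contra hxne
      obtain ⟨k, hk, hk2⟩ := hA x hx0 hxne
      have hterm : ∀ i ∈ Finset.univ, 0 ≤ x i * (q i + tcontr A x i) :=
        fun i _ => mul_nonneg (hx0 i) (hpos i)
      have h0 := (Finset.sum_eq_zero_iff_of_nonneg hterm).mp hsum k (Finset.mem_univ k)
      have : 0 < x k * (q k + tcontr A x k) :=
        mul_pos hk (by linarith [hq k])
      linarith
    · rintro rfl
      refine ⟨le_refl _, ?_, by simp⟩
      intro i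
      rcases Nat.eq_zero_or_pos m with hm | hm
      · subst hm
        have hconst : ∀ y : Fin n → ℝ, tcontr A y i = tcontr A (0 : Fin n → ℝ) i := by
          intro y
          unfold tcontr
          simp
        obtain ⟨k, hk, hk2⟩ := hA (fun j => if j = i then 1 else 0)
          (fun j => by dsimp; split_ifs <;> norm_num)
          (fun h => by simpa using congrFun h i)
        have hki : k = i := by by_contra hne; simp [hne] at hk
        rw [hki, hconst] at hk2
        linarith [hq i]
      · have hz : tcontr A (0 : Fin n → ℝ) i = 0 := by
          unfold tcontr
          apply Finset.sum_eq_zero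
          intro g _
          simp [Finset.prod_const, zero_pow hm.ne']
        rw [hz, add_zero]
        exact (hq i).le
  · intro h x hx0 hxne
    by_contra hc
    push_neg at hc
    set q : Fin n → ℝ := fun i => if 0 < x i then -tcontr A x i else |tcontr A x i| + 1 with hqdef
    have hq : ∀ i, 0 < q i := by
      intro i
      by_cases hi : 0 < x i
      · simp only [hqdef, hi, if_pos]
        linarith [hc i hi]
      · simp only [hqdef, hi, if_neg, not_false_iff]
        positivity
    have hsol : TCPsol A q x := by
      refine ⟨hx0, ?_, ?_⟩
      · intro i
        by_cases hi : 0 < x i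
        · simp only [hqdef, hi, if_pos]
          linarith
        · simp only [hqdef, hi, if_neg, not_false_iff]
          have := neg_abs_le (tcontr A x i)
          linarith
      · apply Finset.sum_eq_zero
        intro i _
        by_cases hi : 0 < x i
        · simp only [hqdef, hi, if_pos]
          ring
        · have : x i = 0 := le_antisymm (not_lt.mp hi) (hx0 i)
          rw [this, zero_mul]
    exact hxne ((h q hq x).mp hsol)
end

section
/- A real tensor A of order m and dimension n is strictly semi-positive if and only if for every q ≥ 0, the tensor complementarity problem TCP(q, A) has the unique solution x = 0. -/
open Finset

lemma tcontr_zero_nonneg {m n : ℕ} {A : (Fin (m + 1) → Fin n) → ℝ}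
    (h : StrictSemiPos A) (i : Fin n) : 0 ≤ tcontr A 0 i := by
  cases m with
  | zero =>
    have hx : (Pi.single i 1 : Fin n → ℝ) ≠ 0 := by
      intro h0
      have := congrFun h0 i
      simp at this
    obtain ⟨k, hk1, hk2⟩ := h (Pi.single i 1 : Fin n → ℝ)
      (by intro j; by_cases hj : j = i <;> simp [Pi.single_apply, hj]) hx
    have hki : k = i := by
      by_contra hne
      simp [Pi.single_apply, hne] at hk1
    subst hki
    have heq : tcontr A (0 : Fin n → ℝ) k = tcontr A (Pi.single k 1) k := by
      simp [tcontr]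
    rw [heq]
    exact hk2.le
  | succ m' =>
    have heq : tcontr A (0 : Fin n → ℝ) i = 0 := by
      simp [tcontr]
    rw [heq]

theorem stmt_7 {m n : ℕ} (A : (Fin (m + 1) → Fin n) → ℝ) :
    StrictSemiPos A ↔
      ∀ q : Fin n → ℝ, 0 ≤ q → ∀ x : Fin n → ℝ, TCPsol A q x ↔ x = 0 := by
  constructor
  · intro hA q hq x
    constructor
    · rintro ⟨hx, hqx, hsum⟩
      by_contra hx0
      obtain ⟨k, hk1, hk2⟩ := hA x hx hx0
      have hterm : 0 < x k * (q k + tcontr A x k) :=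
        mul_pos hk1 (by have := hq k; simp only [Pi.zero_apply] at this; linarith)
      have hle : ∀ i ∈ Finset.univ, 0 ≤ x i * (q i + tcontr A x i) :=
        fun i _ => mul_nonneg (hx i) (hqx i)
      have hpos : 0 < ∑ i, x i * (q i + tcontr A x i) :=
        Finset.sum_pos' hle ⟨k, Finset.mem_univ k, hterm⟩
      linarith
    · rintro rfl
      refine ⟨le_refl 0, fun i => add_nonneg (hq i) (tcontr_zero_nonneg hA i), by simp⟩
  · intro h x hx hx0
    by_contra hcon
    push_neg at hcon
    set q : Fin n → ℝ :=
      fun i => if 0 < x i then -(tcontr A x i) else max 0 (-(tcontr A x i)) with hqdef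
    have hq : 0 ≤ q := by
      intro i
      by_cases hi : 0 < x i
      · simp only [hqdef, hi, if_true]
        exact neg_nonneg.2 (hcon i hi)
      · simp only [hqdef, hi, if_false]
        exact le_max_left 0 _
    have hsol : TCPsol A q x := by
      refine ⟨hx, fun i => ?_, ?_⟩
      · by_cases hi : 0 < x i
        · simp [hqdef, hi]
        · simp only [hqdef, hi, if_false]
          have := le_max_right 0 (-(tcontr A x i))
          linarith
      · apply Finset.sum_eq_zero
        intro i _
        by_cases hi : 0 < x i
        · simp [hqdef, hi]
        · have : x i = 0 := le_antisymm (not_lt.1 hi) (hx i)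
          rw [this, zero_mul]
    exact hx0 ((h q hq x).mp hsol)
end

section
/- A real tensor A of order m and dimension n is semi-positive if and only if for every nonempty index set N ⊆ {1,...,n}, the system A^{|N|}(x^N)^{m-1} < 0, x^N ≥ 0 has no solution x^N ∈ ℝ^{|N|}. -/
open Finset

lemma key {m n : ℕ} (A : (Fin (m+1) → Fin n) → ℝ) (N : Finset (Fin n))
    (y : Fin n → ℝ) (hy : ∀ i, i ∉ N → y i = 0) (k : Fin n) (hk : k ∈ N) :
    tcontr (subT A N) (fun i : {i // i ∈ N} => y i) ⟨k, hk⟩ = tcontr A y k := by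
  classical
  unfold tcontr subT
  rw [← Finset.sum_filter_of_ne (p := fun g : Fin m → Fin n => ∀ t, g t ∈ N)
      (fun g _ hne t => by
        by_contra ht
        exact hne (mul_eq_zero_of_right _
          (Finset.prod_eq_zero (Finset.mem_univ t) (hy _ ht))))]
  refine Finset.sum_nbij' (i := fun (g : Fin m → {i // i ∈ N}) => fun t => (g t : Fin n))
    (j := fun g => fun t => if h : g t ∈ N then ⟨g t, h⟩ else ⟨k, hk⟩)
    ?_ ?_ ?_ ?_ ?_
  · intro g _
    simp
  · intro g _
    exact Finset.mem_univ _
  · intro g _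
    funext t
    simp
  · intro g hg
    simp only [Finset.mem_filter] at hg
    funext t
    simp [hg.2 t]
  · intro g _
    congr 1
    · congr 1
      funext t
      refine Fin.cases ?_ ?_ t <;> simp

lemma tcontr_m0 {ι : Type*} [Fintype ι] [DecidableEq ι]
    (B : (Fin 1 → ι) → ℝ) (x x' : ι → ℝ) (i : ι) :
    tcontr (m := 0) B x i = tcontr (m := 0) B x' i := by
  simp [tcontr]

theorem stmt_8 {m n : ℕ} (A : (Fin (m + 1) → Fin n) → ℝ) :
    SemiPos A ↔
      ∀ N : Finset (Fin n), N.Nonempty →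
        ¬∃ x : {i // i ∈ N} → ℝ, 0 ≤ x ∧ ∀ i, tcontr (subT A N) x i < 0 := by
  classical
  constructor
  · rintro hA N ⟨k0, hk0⟩ ⟨x, hx0, hxneg⟩
    set y : Fin n → ℝ := fun i => if h : i ∈ N then x ⟨i, h⟩ else 0 with hy_def
    have hy : ∀ i, i ∉ N → y i = 0 := fun i hi => by simp [hy_def, hi]
    have hxy : (fun i : {i // i ∈ N} => y i) = x := by
      funext i
      simp [hy_def, i.2]
    by_cases hy0 : y = 0
    · -- x = 0 on N
      have hx_eq : x = 0 := by
        rw [← hxy, hy0]; funext i; simp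
      rcases Nat.eq_zero_or_pos m with hm | hm
      · subst hm
        set z : Fin n → ℝ := fun i => if i ∈ N then 1 else 0 with hz_def
        have hz0 : (0:Fin n → ℝ) ≤ z := by
          intro i; by_cases h : i ∈ N <;> simp [hz_def, h]
        have hzne : z ≠ 0 := by
          intro h
          have := congrFun h k0
          simp [hz_def, hk0] at this
        obtain ⟨k, hk, hk2⟩ := hA z hz0 hzne
        have hkN : k ∈ N := by
          by_contra h
          simp [hz_def, h] at hk
        have := key A N z (fun i hi => by simp [hz_def, hi]) k hkN
        have h3 := hxneg ⟨k, hkN⟩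
        rw [tcontr_m0 (subT A N) x (fun i : {i // i ∈ N} => z i)] at h3
        rw [this] at h3
        exact absurd hk2 (not_le.mpr h3)
      · have h3 := hxneg ⟨k0, hk0⟩
        rw [hx_eq] at h3
        have : tcontr (subT A N) (0 : {i // i ∈ N} → ℝ) ⟨k0, hk0⟩ = 0 := by
          obtain ⟨m', rfl⟩ := Nat.exists_eq_succ_of_ne_zero hm.ne'
          simp [tcontr, Finset.prod_const, zero_pow]
        rw [this] at h3
        exact absurd h3 (lt_irrefl 0)
    · obtain ⟨k, hk, hk2⟩ := hA y (by
        intro i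
        by_cases h : i ∈ N
        · simpa [hy_def, h] using hx0 ⟨i, h⟩
        · simp [hy_def, h]) hy0
      have hkN : k ∈ N := by
        by_contra h
        rw [hy k h] at hk
        exact lt_irrefl 0 hk
      have := key A N y hy k hkN
      rw [hxy] at this
      exact absurd hk2 (not_le.mpr (this ▸ hxneg ⟨k, hkN⟩))
  · intro h x hx0 hxne
    by_contra hc
    push_neg at hc
    set N : Finset (Fin n) := Finset.univ.filter (fun i => x i ≠ 0) with hN_def
    have hNne : N.Nonempty := by
      obtain ⟨i, hi⟩ := Function.ne_iff.mp hxne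
      exact ⟨i, by simp only [hN_def, Finset.mem_filter, Finset.mem_univ, true_and]; simpa using hi⟩
    have hy : ∀ i, i ∉ N → x i = 0 := by
      intro i hi
      by_contra h'
      exact hi (by simp [hN_def, h'])
    refine h N hNne ⟨fun i => x i, fun i => hx0 i, fun i => ?_⟩
    have hiN : (i : Fin n) ∈ N := i.2
    have hiN' : (i : Fin n) ∈ Finset.univ.filter (fun j => x j ≠ 0) := hN_def ▸ hiN
    have hxi : 0 < x i := (hx0 i).lt_of_ne
      (fun h0 => (Finset.mem_filter.mp hiN').2 h0.symm)
    have hneg := hc i hxi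
    have := key A N x hy i hiN
    rw [Subtype.eta] at this  -- maybe unneeded
    rw [this]
    exact hneg
end

section
/- A real tensor A of order m and dimension n is strictly semi-positive if and only if for every nonempty index set N ⊆ {1,...,n}, the system A^{|N|}(x^N)^{m-1} ≤ 0, x^N ≥ 0, x^N ≠ 0 has no solution. -/
open Finset

lemma key_stmt9 {m n : ℕ} (A : (Fin (m + 1) → Fin n) → ℝ) (N : Finset (Fin n))
    (x : Fin n → ℝ) (hx : ∀ j, j ∉ N → x j = 0) (i : Fin n) (hi : i ∈ N) :
    tcontr (subT A N) (fun j => x j.val) ⟨i, hi⟩ = tcontr A x i := by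
  classical
  unfold tcontr subT
  rw [← Finset.sum_filter_add_sum_filter_not Finset.univ (fun g : Fin m → Fin n => ∀ t, g t ∈ N)]
  have h2 : ∑ g ∈ Finset.univ.filter (fun g : Fin m → Fin n => ¬ ∀ t, g t ∈ N),
      A (Fin.cons i g) * ∏ t, x (g t) = 0 := by
    refine Finset.sum_eq_zero fun g hg => ?_
    simp only [Finset.mem_filter, not_forall] at hg
    obtain ⟨t, ht⟩ := hg.2
    rw [Finset.prod_eq_zero (Finset.mem_univ t) (hx _ ht), mul_zero]
  rw [h2, add_zero]
  refine Finset.sum_bij (fun (g : Fin m → {i // i ∈ N}) _ => fun t => (g t : Fin n)) ?_ ?_ ?_ ?_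
  · intro g _; simp
  · intro g1 _ g2 _ h
    funext t
    exact Subtype.ext (congrFun h t)
  · intro g hg
    simp only [Finset.mem_filter] at hg
    exact ⟨fun t => ⟨g t, hg.2 t⟩, Finset.mem_univ _, rfl⟩
  · intro g _
    congr 1
    congr 1
    funext t
    refine Fin.cases ?_ ?_ t <;> simp

theorem stmt_9 {m n : ℕ} (A : (Fin (m + 1) → Fin n) → ℝ) :
    StrictSemiPos A ↔
      ∀ N : Finset (Fin n), N.Nonempty →
        ¬∃ x : {i // i ∈ N} → ℝ, 0 ≤ x ∧ x ≠ 0 ∧ ∀ i, tcontr (subT A N) x i ≤ 0 := by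
  classical
  constructor
  · rintro h N hN ⟨x, hx0, hxne, hxle⟩
    set y : Fin n → ℝ := fun j => if hj : j ∈ N then x ⟨j, hj⟩ else 0 with hy
    have hy0 : 0 ≤ y := by
      intro j; by_cases hj : j ∈ N <;> simp [hy, hj]
      exact hx0 _
    have hyne : y ≠ 0 := by
      intro hc
      apply hxne
      funext i
      have := congrFun hc i.1
      simpa [hy, i.2] using this
    obtain ⟨k, hk, hk2⟩ := h y hy0 hyne
    have hkN : k ∈ N := by
      by_contra hc; simp [hy, hc] at hk
    have hxy : (fun j : {i // i ∈ N} => y j.val) = x := by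
      funext j; simp [hy, j.2]
    have hkey := key_stmt9 A N y (fun j hj => by simp [hy, hj]) k hkN
    rw [hxy] at hkey
    have := hxle ⟨k, hkN⟩
    linarith
  · intro h x hx0 hxne
    by_contra hc
    push_neg at hc
    set N : Finset (Fin n) := Finset.univ.filter (fun j => 0 < x j) with hNdef
    have hN : N.Nonempty := by
      obtain ⟨i, hi⟩ : ∃ i, x i ≠ 0 := by
        by_contra h'; push_neg at h'; exact hxne (funext h')
      exact ⟨i, by simp [hNdef]; exact lt_of_le_of_ne (hx0 i) (Ne.symm hi)⟩
    refine h N hN ⟨fun j => x j.val, fun j => hx0 _, ?_, ?_⟩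
    · intro h'
      obtain ⟨i, hi⟩ := hN
      have : x i = 0 := congrFun h' ⟨i, hi⟩
      simp [hNdef] at hi
      linarith
    · intro i
      have hzero : ∀ j, j ∉ N → x j = 0 := by
        intro j hj
        simp [hNdef] at hj
        exact le_antisymm hj (hx0 j)
      rw [key_stmt9 A N x hzero i.1 i.2]
      exact hc i.1 ((Finset.mem_filter.mp i.2).2)
end

section
/- If A is a semi-positive tensor, then for every q > 0 the zero vector solves TCP(q, A), i.e., 0 ≥ 0, q + A·0^{m-1} ≥ 0, and 0ᵀ(q + A·0^{m-1}) = 0, and no nonzero x ≥ 0 solves TCP(q, A). -/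
open Finset

theorem stmt_10 {m n : ℕ} (A : (Fin (m + 1) → Fin n) → ℝ) (h : SemiPos A)
    (q : Fin n → ℝ) (hq : ∀ i, 0 < q i) :
    TCPsol A q 0 ∧ ∀ x : Fin n → ℝ, 0 ≤ x → x ≠ 0 → ¬TCPsol A q x := by
  have hzero : ∀ i, 0 ≤ tcontr A (0 : Fin n → ℝ) i := by
    intro i
    cases m with
    | zero =>
      obtain ⟨k, hk, hk2⟩ := h (fun j => if j = i then (1:ℝ) else 0)
        (by intro j; dsimp; split <;> norm_num)
        (by
          intro hcon
          have := congrFun hcon i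
          simp at this)
      have hki : k = i := by
        by_contra hne
        simp [hne] at hk
      subst hki
      have heq : tcontr A (fun j => if j = k then (1:ℝ) else 0) k
          = tcontr A (0 : Fin n → ℝ) k := by
        unfold tcontr
        simp
      rwa [heq] at hk2
    | succ m' =>
      have : tcontr A (0 : Fin n → ℝ) i = 0 := by
        unfold tcontr
        simp
      rw [this]
  constructor
  · refine ⟨le_refl _, fun i => ?_, by simp⟩
    have := hzero i
    have := (hq i).le
    linarith
  · rintro x hx0 hxne ⟨-, h2, h3⟩
    obtain ⟨k, hk, hk2⟩ := h x hx0 hxne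
    have hterms : ∀ i ∈ Finset.univ, 0 ≤ x i * (q i + tcontr A x i) :=
      fun i _ => mul_nonneg (hx0 i) (h2 i)
    have hk3 := (Finset.sum_eq_zero_iff_of_nonneg hterms).mp h3 k (Finset.mem_univ k)
    have : 0 < x k * (q k + tcontr A x k) :=
      mul_pos hk (by have := hq k; linarith)
    linarith
end

section
/- Every copositive tensor (not necessarily symmetric) is semi-positive. -/
open Finset

lemma tform_eq {m : ℕ} {ι : Type*} [Fintype ι] [DecidableEq ι]
    (A : (Fin (m + 1) → ι) → ℝ) (x : ι → ℝ) :
    tform A x = ∑ i, x i * tcontr A x i := by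
  simp only [tform, tcontr, Finset.mul_sum]
  have key := Fintype.sum_equiv (Fin.consEquiv fun _ => ι).symm
    (fun f => A f * ∏ t, x (f t))
    (fun p => x p.1 * (A (Fin.cons p.1 p.2) * ∏ t, x (p.2 t))) ?_
  · rw [key, Fintype.sum_prod_type]
  intro f
  simp only [Fin.consEquiv_symm_apply]
  rw [Fin.cons_self_tail, Fin.prod_univ_succ]
  simp only [Fin.tail]
  ring

theorem stmt_11 {m n : ℕ} (A : (Fin (m + 1) → Fin n) → ℝ) (h : Copos A) :
    SemiPos A := by
  intro x hx hx0
  by_contra hcon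
  push_neg at hcon
  have hlt : tform A x < 0 := by
    rw [tform_eq]
    have hne : ∃ k, 0 < x k := by
      by_contra hk
      push_neg at hk
      exact hx0 (funext fun i => le_antisymm (hk i) (hx i))
    obtain ⟨k, hk⟩ := hne
    apply Finset.sum_neg' (fun i _ => ?_) ⟨k, Finset.mem_univ k, mul_neg_of_pos_of_neg hk (hcon k hk)⟩
    rcases lt_or_eq_of_le (hx i) with hi | hi
    · exact le_of_lt (mul_neg_of_pos_of_neg hi (hcon i hi))
    · simp [← hi]
  exact absurd (h x hx) (not_le.mpr hlt)
end

section
/- A symmetric real tensor A of order m and dimension n is semi-positive if and only if it is copositive. -/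
/-!
Copositive tensors are semi-positive by Euler's identity `A x^m = ∑ xᵢ (A x^{m-1})ᵢ`: if
`(A x^{m-1})ᵢ < 0` at every `i` with `xᵢ > 0`, then `A x^m < 0`.

Conversely, let `x₀` minimise `A x^m` over the standard simplex, with value `μ`. By homogeneity
`A y^m ≥ μ (∑ yᵢ)^m` for every `y ≥ 0`, so it suffices that `μ ≥ 0`. For symmetric `A` the
gradient of `x ↦ A x^m` is `m · A x^{m-1}`. If `x₀ᵢ > 0`, then
`t ↦ A (x₀ + t eᵢ)^m - μ (1 + t)^m` is nonnegative for `t > -x₀ᵢ` and vanishes at `0`, so its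
derivative there, `m ((A x₀^{m-1})ᵢ - μ)`, is zero. Semi-positivity gives such an `i` with
`(A x₀^{m-1})ᵢ ≥ 0`, hence `μ ≥ 0`.
-/

open Finset

theorem Function.update_const_eq_cons_comp_swap {m : ℕ} {α : Type*} (a b : α) (s : Fin (m + 1)) :
    Function.update (fun _ => a) s b =
      (Fin.cons b fun _ => a : Fin (m + 1) → α) ∘ Equiv.swap 0 s := by
  have hcons {j : Fin (m + 1)} (hj : j ≠ 0) : (Fin.cons b fun _ => a : Fin (m + 1) → α) j = a := by
    obtain ⟨j, rfl⟩ := Fin.exists_succ_eq.2 hj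
    rfl
  funext r
  rcases eq_or_ne r s with rfl | hrs
  · simp
  rcases eq_or_ne r 0 with rfl | hr0
  · simp [Function.update_of_ne hrs, hcons hrs.symm]
  · simp [Equiv.swap_apply_of_ne_of_ne hr0 hrs, hrs, hcons hr0]

section TensorForm

variable {m : ℕ} {ι : Type*} [Fintype ι] (A : (Fin (m + 1) → ι) → ℝ)

def tmulti (y : Fin (m + 1) → ι → ℝ) : ℝ :=
  ∑ f : Fin (m + 1) → ι, A f * ∏ r, y r (f r)

theorem tmulti_const [DecidableEq ι] (x : ι → ℝ) : tmulti A (fun _ => x) = tform A x := rfl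

theorem tmulti_cons [DecidableEq ι] (v x : ι → ℝ) :
    tmulti A (Fin.cons v fun _ => x) = ∑ i, v i * tcontr A x i := by
  rw [tmulti, ← (Fin.consEquiv fun _ => ι).sum_comp, Fintype.sum_prod_type]
  refine sum_congr rfl fun i _ => ?_
  simp only [tcontr, mul_sum, Fin.consEquiv, Equiv.coe_fn_mk, Fin.prod_univ_succ, Fin.cons_zero,
    Fin.cons_succ]
  exact sum_congr rfl fun g _ => by ring

theorem tmulti_update_const (x v : ι → ℝ) (s : Fin (m + 1)) :
    tmulti A (Function.update (fun _ => x) s v) =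
      ∑ f : Fin (m + 1) → ι, A f * ((∏ r ∈ univ.erase s, x (f r)) • v (f s)) := by
  refine sum_congr rfl fun f _ => ?_
  simp only [Function.apply_update (fun r (y : ι → ℝ) => y (f r)), prod_update_of_mem (mem_univ s),
    sdiff_singleton_eq_erase, smul_eq_mul, mul_comm (v (f s))]

theorem tform_eq_sum_mul_tcontr [DecidableEq ι] (x : ι → ℝ) :
    tform A x = ∑ i, x i * tcontr A x i := by
  rw [← tmulti_cons, ← tmulti_const]
  congr 1
  funext r
  cases r using Fin.cases <;> rfl

theorem tform_smul [DecidableEq ι] (c : ℝ) (x : ι → ℝ) :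
    tform A (c • x) = c ^ (m + 1) * tform A x := by
  simp only [tform, mul_sum, Pi.smul_apply, smul_eq_mul, prod_mul_distrib, prod_const, card_univ,
    Fintype.card_fin]
  exact sum_congr rfl fun f _ => by ring

theorem continuous_tform [DecidableEq ι] : Continuous (tform A) := by
  unfold tform
  fun_prop

theorem hasDerivAt_tform_add_smul [DecidableEq ι] (x v : ι → ℝ) :
    HasDerivAt (fun t : ℝ => tform A (x + t • v))
      (∑ s, tmulti A (Function.update (fun _ => x) s v)) 0 := by
  have hline (i : ι) : HasDerivAt (fun t : ℝ => x i + t * v i) (v i) 0 := by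
    simpa using ((hasDerivAt_id (0 : ℝ)).mul_const (v i)).const_add (x i)
  refine (HasDerivAt.fun_sum fun f (_ : f ∈ univ) =>
    (HasDerivAt.fun_finsetProd (u := univ) fun r _ => hline (f r)).const_mul (A f)).congr_deriv ?_
  simp only [tmulti_update_const, zero_smul, add_zero, mul_sum]
  exact sum_comm

theorem tform_mul_sum_pow_le_of_isMinOn [DecidableEq ι] {x₀ y : ι → ℝ}
    (hmin : IsMinOn (tform A) (stdSimplex ℝ ι) x₀) (hy : 0 ≤ y) :
    tform A x₀ * (∑ i, y i) ^ (m + 1) ≤ tform A y := by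
  set s := ∑ i, y i
  have hs0 : 0 ≤ s := sum_nonneg fun i _ => hy i
  rcases hs0.eq_or_lt with hs | hs
  · have hy0 : y = 0 :=
      funext fun i => (sum_eq_zero_iff_of_nonneg fun i _ => hy i).1 hs.symm i (mem_univ i)
    rw [← hs, zero_pow (Nat.succ_ne_zero m), mul_zero, hy0]
    simp [tform]
  · have hmem : s⁻¹ • y ∈ stdSimplex ℝ ι :=
      ⟨fun i => mul_nonneg (inv_nonneg.2 hs.le) (hy i), by
        simp only [Pi.smul_apply, smul_eq_mul, ← mul_sum, s, inv_mul_cancel₀ hs.ne']⟩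
    calc tform A x₀ * s ^ (m + 1) ≤ tform A (s⁻¹ • y) * s ^ (m + 1) :=
          mul_le_mul_of_nonneg_right (hmin hmem) (by positivity)
      _ = tform A y := by
          rw [tform_smul, inv_pow, mul_comm, ← mul_assoc, mul_inv_cancel₀ (by positivity), one_mul]

end TensorForm

theorem Copos.semiPos {m : ℕ} {ι : Type*} [Fintype ι] [DecidableEq ι]
    {A : (Fin (m + 1) → ι) → ℝ} (h : Copos A) : SemiPos A := by
  intro x hx hx0
  by_contra! hneg
  obtain ⟨j, hj⟩ : ∃ j, 0 < x j := (Pi.lt_def.1 (lt_of_le_of_ne hx (Ne.symm hx0))).2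
  have : tform A x < 0 := by
    rw [tform_eq_sum_mul_tcontr]
    refine sum_neg' (fun i _ => ?_) ⟨j, mem_univ j, mul_neg_of_pos_of_neg hj (hneg j hj)⟩
    rcases (hx i).eq_or_lt with h | h
    · simp [← h]
    · exact mul_nonpos_of_nonneg_of_nonpos h.le (hneg i h).le
  exact (h x hx).not_gt this

namespace SymT

variable {m : ℕ} {ι : Type*} [Fintype ι] {A : (Fin (m + 1) → ι) → ℝ}

theorem tmulti_comp_perm (hA : SymT A) (y : Fin (m + 1) → ι → ℝ)
    (σ : Equiv.Perm (Fin (m + 1))) :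
    tmulti A (y ∘ σ) = tmulti A y := by
  rw [tmulti, tmulti, ← (σ.symm.arrowCongr (Equiv.refl ι)).sum_comp]
  refine sum_congr rfl fun g _ => ?_
  have hg : σ.symm.arrowCongr (Equiv.refl ι) g = g ∘ σ := rfl
  rw [hg, hA g σ]
  exact congrArg _ (Equiv.prod_comp σ fun r => y r (g r))

theorem hasDerivAt_tform_add_smul (hA : SymT A) [DecidableEq ι] (x v : ι → ℝ) :
    HasDerivAt (fun t : ℝ => tform A (x + t • v)) ((m + 1) * ∑ i, v i * tcontr A x i) 0 := by
  refine (_root_.hasDerivAt_tform_add_smul A x v).congr_deriv ?_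
  simp only [Function.update_const_eq_cons_comp_swap, hA.tmulti_comp_perm, tmulti_cons, sum_const,
    card_univ, Fintype.card_fin, nsmul_eq_mul]
  push_cast
  ring

theorem tcontr_eq_tform_of_isMinOn (hA : SymT A) [DecidableEq ι] {x₀ : ι → ℝ}
    (hmin : IsMinOn (tform A) (stdSimplex ℝ ι) x₀) (hx₀ : x₀ ∈ stdSimplex ℝ ι) {k : ι}
    (hk : 0 < x₀ k) : tcontr A x₀ k = tform A x₀ := by
  set μ := tform A x₀
  set F : ℝ → ℝ := fun t => tform A (x₀ + t • (Pi.single k 1 : ι → ℝ)) - μ * (1 + t) ^ (m + 1)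
  have hF : HasDerivAt F ((m + 1) * tcontr A x₀ k - μ * (m + 1)) 0 := by
    have h1 := hA.hasDerivAt_tform_add_smul x₀ (Pi.single k 1 : ι → ℝ)
    simp only [Pi.single_apply, ite_mul, one_mul, zero_mul, sum_ite_eq', mem_univ, if_true] at h1
    have h2 : HasDerivAt (fun t : ℝ => μ * (1 + t) ^ (m + 1)) (μ * (m + 1)) 0 := by
      simpa using (((hasDerivAt_id (0 : ℝ)).const_add 1).pow (m + 1)).const_mul μ
    exact h1.sub h2
  have hlocal : IsLocalMin F 0 := by
    filter_upwards [Ioi_mem_nhds (neg_lt_zero.2 hk)] with t ht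
    have hy : 0 ≤ x₀ + t • (Pi.single k 1 : ι → ℝ) := by
      intro i
      rcases eq_or_ne i k with rfl | hik
      · simp only [Pi.add_apply, Pi.smul_apply, Pi.single_eq_same, smul_eq_mul, mul_one,
          Pi.zero_apply]
        linarith [Set.mem_Ioi.1 ht]
      · simp [hik, hx₀.1 i]
    have hsum : ∑ i, (x₀ + t • (Pi.single k 1 : ι → ℝ)) i = 1 + t := by
      simp [sum_add_distrib, hx₀.2, Pi.single_apply]
    have := tform_mul_sum_pow_le_of_isMinOn A hmin hy
    rw [hsum] at this
    simpa only [F, μ, zero_smul, add_zero, one_pow, mul_one, sub_self, sub_nonneg] using this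
  have hm : (m + 1 : ℝ) ≠ 0 := by positivity
  exact mul_left_cancel₀ hm (by linarith [hlocal.hasDerivAt_eq_zero hF])

theorem copos_of_semiPos (hA : SymT A) [DecidableEq ι] (h : SemiPos A) : Copos A := by
  intro z hz
  cases isEmpty_or_nonempty ι
  · simp [tform]
  obtain ⟨i⟩ := ‹Nonempty ι›
  obtain ⟨x₀, hx₀, hmin⟩ := (isCompact_stdSimplex ℝ ι).exists_isMinOn
    ⟨_, single_mem_stdSimplex ℝ i⟩ (continuous_tform A).continuousOn
  have hμ : 0 ≤ tform A x₀ := by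
    by_contra! hμ
    have hx₀0 : x₀ ≠ 0 := by
      rintro rfl
      simpa using hx₀.2
    obtain ⟨k, hk, hk'⟩ := h x₀ hx₀.1 hx₀0
    rw [hA.tcontr_eq_tform_of_isMinOn hmin hx₀ hk] at hk'
    exact hk'.not_gt hμ
  exact (mul_nonneg hμ (pow_nonneg (sum_nonneg fun i _ => hz i) _)).trans
    (tform_mul_sum_pow_le_of_isMinOn A hmin hz)

end SymT

theorem stmt_13 {m n : ℕ} (A : (Fin (m + 1) → Fin n) → ℝ) (hA : SymT A) :
    SemiPos A ↔ Copos A :=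
  ⟨hA.copos_of_semiPos, Copos.semiPos⟩
end
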